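/- Let N ≥ 1 be an integer, let 0 < L ≤ U be reals with condition number κ = U/L, and let x ∈ ℝ^N satisfy L ≤ x_i ≤ U for all i. Define g(p) = (1/p)·ln((1/N)·∑_{i=1}^N x_i^p) for nonzero real p. Then for every nonzero real p ≤ 1, the derivative of g at p is bounded: g'(p) ≤ κ·ln κ. -/

import Mathlib

open Real BigOperators Finset

set_option maxHeartbeats 1600000 in
/-- Bound on the derivative of the log of the generalized `p`-mean: if the entries of
`x` lie in `[L, U]` with `0 < L ≤ U` and `κ = U/L`, then `g'(p) ≤ κ·ln κ` for every
nonzero `p ≤ 1`, where `g(p) = (1/p)·ln((1/N)·∑ xᵢ^p)`. -/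
theorem log_pmean_deriv_bound {N : ℕ} (hN : 1 ≤ N) (L U : ℝ) (hL : 0 < L)
    (hLU : L ≤ U) (κ : ℝ) (hκ : κ = U / L) (x : Fin N → ℝ)
    (hx : ∀ i, x i ∈ Set.Icc L U) (g : ℝ → ℝ)
    (hg : ∀ p : ℝ, g p = (1 / p) * Real.log ((1 / N : ℝ) * ∑ i, x i ^ p))
    (p : ℝ) (hp : p ≠ 0) (hp1 : p ≤ 1) :
    deriv g p ≤ κ * Real.log κ := by
  have hU : 0 < U := hL.trans_le hLU
  have hκ1 : 1 ≤ κ := by rw [hκ]; exact (one_le_div hL).mpr hLU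
  have hκ0 : 0 < κ := lt_of_lt_of_le one_pos hκ1
  have hlogκ : 0 ≤ Real.log κ := Real.log_nonneg hκ1
  have hNR : (0:ℝ) < (N:ℝ) := by exact_mod_cast Nat.lt_of_lt_of_le Nat.zero_lt_one hN
  set t : ℝ := |p| with htdef
  have ht0 : 0 < t := abs_pos.mpr hp
  have hxpos : ∀ i, 0 < x i := fun i => hL.trans_le (hx i).1
  set m : ℝ := min (L ^ p) (U ^ p) with hmdef
  set M : ℝ := max (L ^ p) (U ^ p) with hMdef
  have hm0 : 0 < m := lt_min (Real.rpow_pos_of_pos hL p) (Real.rpow_pos_of_pos hU p)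
  have hM0 : 0 < M := hm0.trans_le (min_le_max)
  have hxp0 : ∀ i, 0 < x i ^ p := fun i => Real.rpow_pos_of_pos (hxpos i) p
  have hmM : ∀ i, m ≤ x i ^ p ∧ x i ^ p ≤ M := by
    intro i
    obtain ⟨h1, h2⟩ := hx i
    rcases le_or_gt 0 p with hp0 | hp0
    · exact ⟨le_trans (min_le_left _ _) (Real.rpow_le_rpow hL.le h1 hp0),
        le_trans (Real.rpow_le_rpow (hxpos i).le h2 hp0) (le_max_right _ _)⟩
    · exact ⟨le_trans (min_le_right _ _) (Real.rpow_le_rpow_of_nonpos (hxpos i) h2 hp0.le),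
        le_trans (Real.rpow_le_rpow_of_nonpos hL h1 hp0.le) (le_max_left _ _)⟩
  have hMm : M = m * κ ^ t := by
    rcases le_or_gt 0 p with hp0 | hp0
    · have hle : L ^ p ≤ U ^ p := Real.rpow_le_rpow hL.le hLU hp0
      have ht : t = p := abs_of_nonneg hp0
      rw [hmdef, hMdef, min_eq_left hle, max_eq_right hle, ht, hκ,
        Real.div_rpow hU.le hL.le]
      field_simp [ne_of_gt (Real.rpow_pos_of_pos hL p)]
    · have hle : U ^ p ≤ L ^ p := Real.rpow_le_rpow_of_nonpos hL hLU hp0.le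
      have ht : t = -p := abs_of_neg hp0
      rw [hmdef, hMdef, min_eq_right hle, max_eq_left hle, ht, hκ,
        Real.rpow_neg (by positivity), Real.div_rpow hU.le hL.le]
      rw [inv_div]
      field_simp [ne_of_gt (Real.rpow_pos_of_pos hU p)]
  have hκt1 : 1 ≤ κ ^ t := Real.one_le_rpow hκ1 ht0.le
  have hlogMm : Real.log M - Real.log m = t * Real.log κ := by
    rw [hMm, Real.log_mul (ne_of_gt hm0) (by positivity), Real.log_rpow hκ0]
    ring
  set S : ℝ := ∑ i, x i ^ p with hSdef
  set A : ℝ := ∑ i, x i ^ p * Real.log (x i) with hAdef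
  have hSlb : (N:ℝ) * m ≤ S := by
    calc (N:ℝ) * m = ∑ _i : Fin N, m := by simp [Finset.card_univ, mul_comm]
    _ ≤ S := Finset.sum_le_sum fun i _ => (hmM i).1
  have hSub : S ≤ (N:ℝ) * M := by
    calc S ≤ ∑ _i : Fin N, M := Finset.sum_le_sum fun i _ => (hmM i).2
    _ = (N:ℝ) * M := by simp [Finset.card_univ, mul_comm]
  have hS0 : 0 < S := lt_of_lt_of_le (by positivity) hSlb
  set B : ℝ := (1 / N : ℝ) * S with hBdef
  have hB0 : 0 < B := by positivity
  have hBm : m ≤ B := by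
    rw [hBdef, div_mul_eq_mul_div, one_mul, le_div_iff₀ hNR]; linarith [hSlb]
  have hBM : B ≤ M := by
    rw [hBdef, div_mul_eq_mul_div, one_mul, div_le_iff₀ hNR]; linarith [hSub]
  have hNB : (N:ℝ) * B = S := by rw [hBdef]; field_simp
  -- derivative computation
  have hSder : HasDerivAt (fun q => ∑ i, x i ^ q) A p := by
    rw [hAdef]
    exact HasDerivAt.fun_sum fun i _ =>
      (Real.hasStrictDerivAt_const_rpow (hxpos i) p).hasDerivAt
  have hinner : HasDerivAt (fun q => (1 / N : ℝ) * ∑ i, x i ^ q) ((1 / N : ℝ) * A) p :=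
    hSder.const_mul _
  have hlogder : HasDerivAt (fun q => Real.log ((1 / N : ℝ) * ∑ i, x i ^ q))
      (((1 / N : ℝ) * A) / ((1 / N : ℝ) * S)) p := by
    have := hinner.log (ne_of_gt hB0)
    simpa [hBdef] using this
  have hinv : HasDerivAt (fun q : ℝ => 1 / q) (-(p ^ 2)⁻¹) p := by
    simpa [one_div] using hasDerivAt_inv hp
  have hgeq : g = fun q => (1 / q) * Real.log ((1 / N : ℝ) * ∑ i, x i ^ q) := funext hg
  have hgder : HasDerivAt g
      (-(p ^ 2)⁻¹ * Real.log B + (1 / p) * (((1 / N : ℝ) * A) / ((1 / N : ℝ) * S))) p := by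
    rw [hgeq]
    simpa [hBdef] using hinv.fun_mul hlogder
  have hNne : (1 / N : ℝ) ≠ 0 := by positivity
  have hderiv : deriv g p = -(p ^ 2)⁻¹ * Real.log B + (1 / p) * (A / S) := by
    rw [hgder.deriv, mul_div_mul_left _ _ hNne]
  -- rewrite p * A as sum of y log y
  have hlogxp : ∀ i, Real.log (x i ^ p) = p * Real.log (x i) := fun i =>
    Real.log_rpow (hxpos i) p
  have hpA : p * A = ∑ i, x i ^ p * Real.log (x i ^ p) := by
    rw [hAdef, Finset.mul_sum]
    exact Finset.sum_congr rfl fun i _ => by rw [hlogxp i]; ring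
  have hlogbounds : ∀ i, Real.log m ≤ Real.log (x i ^ p) ∧
      Real.log (x i ^ p) ≤ Real.log M := fun i =>
    ⟨Real.log_le_log hm0 (hmM i).1, Real.log_le_log (hxp0 i) (hmM i).2⟩
  have hlogmB : Real.log m ≤ Real.log B := Real.log_le_log hm0 hBm
  have hlogBM : Real.log B ≤ Real.log M := Real.log_le_log hB0 hBM
  -- key bound:  p*A - S * log B ≤ S * (p^2 * (κ * log κ))
  have hpt : p ^ 2 = t ^ 2 := (sq_abs p).symm
  have key : p * A - S * Real.log B ≤ S * (p ^ 2 * (κ * Real.log κ)) := by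
    rcases le_or_gt t 1 with htle | htgt
    · -- small |p| : Jensen + covariance bound
      have jensen : (N:ℝ)⁻¹ * ∑ i, Real.log (x i ^ p) ≤ Real.log B := by
        have hcon : ConcaveOn ℝ (Set.Ioi (0:ℝ)) Real.log :=
          strictConcaveOn_log_Ioi.concaveOn
        have h := hcon.le_map_sum (t := Finset.univ) (w := fun _ : Fin N => (N:ℝ)⁻¹)
          (p := fun i => x i ^ p) (fun i _ => by positivity)
          (by simp [Finset.card_univ]; field_simp)
          (fun i _ => Set.mem_Ioi.mpr (hxp0 i))
        have hB : B = ∑ i, (N:ℝ)⁻¹ * x i ^ p := by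
          rw [hBdef, one_div, Finset.mul_sum]
        rw [hB, ← Finset.mul_sum]
        simpa [smul_eq_mul, Finset.mul_sum] using h
      have jensen' : ∑ i, Real.log (x i ^ p) ≤ (N:ℝ) * Real.log B := by
        rw [inv_mul_le_iff₀ hNR] at jensen
        linarith [jensen]
      have h5 : B * ∑ i, Real.log (x i ^ p) ≤ S * Real.log B := by
        calc B * ∑ i, Real.log (x i ^ p) ≤ B * ((N:ℝ) * Real.log B) :=
              mul_le_mul_of_nonneg_left jensen' hB0.le
          _ = S * Real.log B := by rw [← hNB]; ring
      have expand : ∑ i, (x i ^ p - B) * (Real.log (x i ^ p) - Real.log m)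
          = p * A - B * ∑ i, Real.log (x i ^ p) := by
        have e1 : ∀ i ∈ Finset.univ, (x i ^ p - B) * (Real.log (x i ^ p) - Real.log m)
            = x i ^ p * Real.log (x i ^ p) - B * Real.log (x i ^ p)
              - Real.log m * x i ^ p + B * Real.log m := fun i _ => by ring
        rw [Finset.sum_congr rfl e1, Finset.sum_add_distrib, Finset.sum_sub_distrib,
          Finset.sum_sub_distrib, ← Finset.mul_sum, ← Finset.mul_sum, ← hpA,
          Finset.sum_const, Finset.card_univ, Fintype.card_fin, nsmul_eq_mul, ← hSdef]
        have : Real.log m * S = (N:ℝ) * (B * Real.log m) := by rw [← hNB]; ring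
        linarith [this]
      have termbound : ∀ i, (x i ^ p - B) * (Real.log (x i ^ p) - Real.log m)
          ≤ (M - m) * (Real.log M - Real.log m) := by
        intro i
        obtain ⟨h1, h2⟩ := hmM i
        obtain ⟨h3, h4⟩ := hlogbounds i
        rcases le_or_gt (x i ^ p) B with hc | hc
        · have hnp : (x i ^ p - B) * (Real.log (x i ^ p) - Real.log m) ≤ 0 :=
            mul_nonpos_of_nonpos_of_nonneg (by linarith) (by linarith)
          have hrhs : 0 ≤ (M - m) * (Real.log M - Real.log m) :=
            mul_nonneg (by linarith [hBM, hBm]) (by linarith [hlogmB, hlogBM])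
          linarith
        · exact mul_le_mul (by linarith) (by linarith) (by linarith)
            (by linarith [hBm])
      have sumbound : ∑ i, (x i ^ p - B) * (Real.log (x i ^ p) - Real.log m)
          ≤ (N:ℝ) * ((M - m) * (Real.log M - Real.log m)) := by
        calc ∑ i, (x i ^ p - B) * (Real.log (x i ^ p) - Real.log m)
            ≤ ∑ _i : Fin N, (M - m) * (Real.log M - Real.log m) :=
              Finset.sum_le_sum fun i _ => termbound i
          _ = (N:ℝ) * ((M - m) * (Real.log M - Real.log m)) := by
              simp [Finset.card_univ, mul_comm]
      have hMmB : M - m ≤ B * (κ ^ t - 1) := by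
        have h6 : (0:ℝ) ≤ (B - m) * (κ ^ t - 1) :=
          mul_nonneg (by linarith [hBm]) (by linarith [hκt1])
        nlinarith [hMm]
      have bern : κ ^ t - 1 ≤ t * κ := by
        have h := rpow_one_add_le_one_add_mul_self (s := κ - 1) (by linarith) ht0.le htle
        have h7 : (1 + (κ - 1)) = κ := by ring
        rw [h7] at h
        nlinarith [ht0.le, hκ1]
      calc p * A - S * Real.log B
          ≤ p * A - B * ∑ i, Real.log (x i ^ p) := by linarith [h5]
        _ = ∑ i, (x i ^ p - B) * (Real.log (x i ^ p) - Real.log m) := expand.symm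
        _ ≤ (N:ℝ) * ((M - m) * (Real.log M - Real.log m)) := sumbound
        _ ≤ S * (p ^ 2 * (κ * Real.log κ)) := by
            rw [hpt, ← hNB]
            have h8 : (M - m) * (Real.log M - Real.log m)
                ≤ B * (t ^ 2 * (κ * Real.log κ)) := by
              rw [hlogMm]
              have h9 : (M - m) * (t * Real.log κ) ≤ B * (κ ^ t - 1) * (t * Real.log κ) :=
                mul_le_mul_of_nonneg_right hMmB (by positivity)
              nlinarith [mul_le_mul_of_nonneg_right bern
                (mul_nonneg (mul_nonneg hB0.le ht0.le) hlogκ)]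
            nlinarith [h8, hNR]
    · -- |p| ≥ 1 : crude bound
      have h1 : p * A ≤ S * Real.log M := by
        rw [hpA, hSdef, Finset.sum_mul]
        exact Finset.sum_le_sum fun i _ =>
          mul_le_mul_of_nonneg_left (hlogbounds i).2 (hxp0 i).le
      have h2 : p * A - S * Real.log B ≤ S * (t * Real.log κ) := by
        have h2a : S * Real.log m ≤ S * Real.log B :=
          mul_le_mul_of_nonneg_left hlogmB hS0.le
        have h2b : S * (Real.log M - Real.log m) = S * (t * Real.log κ) := by
          rw [hlogMm]
        linarith [h1, h2a, h2b]
      have h3 : t * Real.log κ ≤ p ^ 2 * (κ * Real.log κ) := by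
        rw [hpt]
        have htκ : 1 ≤ t * κ := by nlinarith [htgt, hκ1]
        have hnn : 0 ≤ t * Real.log κ * (t * κ - 1) :=
          mul_nonneg (mul_nonneg ht0.le hlogκ) (by linarith)
        nlinarith [hnn]
      calc p * A - S * Real.log B ≤ S * (t * Real.log κ) := h2
        _ ≤ S * (p ^ 2 * (κ * Real.log κ)) := mul_le_mul_of_nonneg_left h3 hS0.le
  -- conclude
  have hp2 : (0:ℝ) < p ^ 2 := by positivity
  have heq : deriv g p = (p * A - S * Real.log B) / S / p ^ 2 := by
    rw [hderiv]
    field_simp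
    ring
  rw [heq, div_le_iff₀ hp2, div_le_iff₀ hS0]
  calc p * A - S * Real.log B ≤ S * (p ^ 2 * (κ * Real.log κ)) := key
    _ = κ * Real.log κ * p ^ 2 * S := by ring
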